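/- If 1 < s < √2, then the restricted tent map T_s : [0,1] → [0,1] is not transitive. -/

import Mathlib

open Set MeasureTheory

noncomputable section

/-- The unit interval `[0,1]` as a subset of `ℝ`. -/
def I01 : Set ℝ := Set.Icc 0 1

/-- `τ` is piecewise monotonic on `[0,1]`: there is a partition
`0 = a 0 < a 1 < ⋯ < a n = 1` such that `τ` is continuous and strictly
monotonic on each open interval `(a i, a (i+1))`. -/
def PiecewiseMonotonic (τ : ℝ → ℝ) : Prop :=
  ∃ n : ℕ, 0 < n ∧ ∃ a : ℕ → ℝ, a 0 = 0 ∧ a n = 1 ∧ (∀ i < n, a i < a (i + 1)) ∧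
    ∀ i < n, ContinuousOn τ (Set.Ioo (a i) (a (i + 1))) ∧
      (StrictMonoOn τ (Set.Ioo (a i) (a (i + 1))) ∨ StrictAntiOn τ (Set.Ioo (a i) (a (i + 1))))

/-- `τ` is uniformly piecewise linear with slopes `±s`. -/
def UniformlyPiecewiseLinear (τ : ℝ → ℝ) (s : ℝ) : Prop :=
  ∃ n : ℕ, 0 < n ∧ ∃ a : ℕ → ℝ, a 0 = 0 ∧ a n = 1 ∧ (∀ i < n, a i < a (i + 1)) ∧
    ∀ i < n, ∃ ε : ℝ, (ε = 1 ∨ ε = -1) ∧ ∃ d : ℝ,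
      ∀ x ∈ Set.Ioo (a i) (a (i + 1)), τ x = ε * s * x + d

/-- The measure `m` is scaled by `τ` by the factor `s`. -/
def ScaledBy (τ : ℝ → ℝ) (m : Measure ℝ) (s : ℝ) : Prop :=
  ∀ E : Set ℝ, E ⊆ I01 → MeasurableSet E → Set.InjOn τ E →
    m (τ '' E) = ENNReal.ofReal s * m E

/-- `m` is a Borel probability measure on `[0,1]`. -/
def ProbOnI (m : Measure ℝ) : Prop := IsProbabilityMeasure m ∧ m I01 = 1

/-- `m` has full support in `[0,1]`. -/
def FullSupportOnI (m : Measure ℝ) : Prop :=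
  ∀ U : Set ℝ, IsOpen U → (U ∩ I01).Nonempty → 0 < m (U ∩ I01)

/-- `m` is non-atomic. -/
def NonAtomic (m : Measure ℝ) : Prop := ∀ x : ℝ, m {x} = 0

/-- `h` is an increasing homeomorphism of `[0,1]` onto itself. -/
def IncSelfHomeoI (h : ℝ → ℝ) : Prop :=
  ContinuousOn h I01 ∧ StrictMonoOn h I01 ∧ h '' I01 = I01

/-- `h` is a homeomorphism of `[0,1]` onto itself. -/
def SelfHomeoI (h : ℝ → ℝ) : Prop :=
  ContinuousOn h I01 ∧ Set.BijOn h I01 I01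

/-- `τ` is topologically transitive on `K`. -/
def TransitiveOn (τ : ℝ → ℝ) (K : Set ℝ) : Prop :=
  ∀ U V : Set ℝ, IsOpen U → IsOpen V → (U ∩ K).Nonempty → (V ∩ K).Nonempty →
    ∃ n : ℕ, ((τ^[n] '' (U ∩ K)) ∩ (V ∩ K)).Nonempty

/-- `τ` is topologically mixing on `K`. -/
def MixingOn (τ : ℝ → ℝ) (K : Set ℝ) : Prop :=
  ∀ U V : Set ℝ, IsOpen U → IsOpen V → (U ∩ K).Nonempty → (V ∩ K).Nonempty →
    ∃ N : ℕ, ∀ n ≥ N, ((τ^[n] '' (U ∩ K)) ∩ (V ∩ K)).Nonempty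

/-- `τ` is topologically exact on `K`. -/
def ExactOn (τ : ℝ → ℝ) (K : Set ℝ) : Prop :=
  ∀ U : Set ℝ, IsOpen U → (U ∩ K).Nonempty → ∃ n : ℕ, τ^[n] '' (U ∩ K) = K

/-- `τ` is essentially injective: there are no two disjoint nondegenerate
intervals in `[0,1]` with the same image under `τ`. -/
def EssentiallyInjective (τ : ℝ → ℝ) : Prop :=
  ¬ ∃ a b c d : ℝ, a < b ∧ c < d ∧ Set.Icc a b ⊆ I01 ∧ Set.Icc c d ⊆ I01 ∧
    Disjoint (Set.Icc a b) (Set.Icc c d) ∧ τ '' Set.Icc a b = τ '' Set.Icc c d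

/-- The restricted tent map with slopes `±s`. -/
def tent (s : ℝ) (x : ℝ) : ℝ :=
  if x ≤ 1 - 1 / s then 1 + s * (x - (1 - 1 / s)) else 1 - s * (x - (1 - 1 / s))

/-- `τ` is unimodal. -/
def Unimodal (τ : ℝ → ℝ) : Prop :=
  ContinuousOn τ I01 ∧ ∃ c : ℝ, 0 < c ∧ c < 1 ∧
    StrictMonoOn τ (Set.Icc 0 c) ∧ StrictAntiOn τ (Set.Icc c 1)

/-- For `1 < s < √2` the restricted tent map `T_s` is not transitive. -/
theorem stmt10 (s : ℝ) (h1 : 1 < s) (h2 : s < Real.sqrt 2) :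
    ¬ TransitiveOn (tent s) I01 := by
  have hs0 : 0 < s := by linarith
  have hs2 : s ^ 2 < 2 := by
    nlinarith [Real.sq_sqrt (show (0:ℝ) ≤ 2 by norm_num), Real.sqrt_nonneg 2]
  have hsc : s * (1 - 1 / s) = s - 1 := by field_simp
  have hsc2 : s ^ 2 * (1 - 1 / s) = s ^ 2 - s := by field_simp
  set p : ℝ := s / (s + 1) with hp
  set b : ℝ := (s ^ 2 - s + p) / 2 with hb
  have hps : p * (s + 1) = s := by rw [hp]; field_simp [show s + 1 ≠ 0 by linarith]
  have hsp2 : s * p = s - p := by nlinarith [hps]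
  have hcp : 1 - 1 / s < p := by nlinarith [hsc, hsp2, hs0]
  have hsp : s ^ 2 - s < p := by nlinarith [hsp2]
  have hb1 : s ^ 2 - s < b := by simp only [hb]; linarith
  have hb2 : b < p := by simp only [hb]; linarith
  have hb0 : 0 < b := by nlinarith
  have hp1 : p < 1 := by nlinarith [hsp2]
  have hp2s : p < 2 - s := by nlinarith [hsp2]
  have hkey : (s ^ 2 - 1) * b < s ^ 2 - s := by nlinarith [hsp2, hb2]
  -- Lemma A : x ∈ [0,b] → tent s x ∈ [p,1]
  have lemA : ∀ x ∈ Set.Icc (0:ℝ) b, tent s x ∈ Set.Icc p 1 := by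
    intro x hx
    obtain ⟨hx0, hxb⟩ := hx
    simp only [tent]
    by_cases hbr : x ≤ 1 - 1 / s
    · rw [if_pos hbr]
      constructor
      · have := mul_nonneg hs0.le hx0
        linarith [hsc]
      · have : s * (x - (1 - 1 / s)) ≤ 0 :=
          mul_nonpos_of_nonneg_of_nonpos hs0.le (by linarith)
        linarith
    · rw [if_neg hbr]
      push_neg at hbr
      constructor
      · have hxp : x ≤ p := by linarith
        have : s * x ≤ s * p := mul_le_mul_of_nonneg_left hxp hs0.le
        have hexp : s * (x - (1 - 1 / s)) = s * x - (s - 1) := by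
          rw [mul_sub, hsc]
        linarith [hsp2]
      · have : 0 ≤ s * (x - (1 - 1 / s)) := mul_nonneg hs0.le (by linarith)
        linarith
  -- Lemma B : x ∈ [0,b] → tent s (tent s x) ∈ [0,b]
  have lemB : ∀ x ∈ Set.Icc (0:ℝ) b, tent s (tent s x) ∈ Set.Icc 0 b := by
    intro x hx
    have hyA := lemA x hx
    obtain ⟨hx0, hxb⟩ := hx
    have hsq : (0:ℝ) ≤ s ^ 2 := sq_nonneg s
    by_cases hbr : x ≤ 1 - 1 / s
    · have h1' : tent s x = 1 + s * (x - (1 - 1 / s)) := by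
        simp only [tent]; rw [if_pos hbr]
      rw [h1'] at hyA ⊢
      have hyc : ¬ (1 + s * (x - (1 - 1 / s)) ≤ 1 - 1 / s) := by
        push_neg; linarith [hyA.1]
      simp only [tent]; rw [if_neg hyc]
      have hexp : 1 - s * (1 + s * (x - (1 - 1 / s)) - (1 - 1 / s)) =
          s ^ 2 * (1 - 1 / s) - s ^ 2 * x + (s * (1 - 1 / s) - s) + 1 := by
        ring
      rw [hexp, hsc, hsc2]
      have hup : s ^ 2 * x ≤ s ^ 2 * (1 - 1 / s) :=
        mul_le_mul_of_nonneg_left hbr hsq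
      rw [hsc2] at hup
      have hlo : 0 ≤ s ^ 2 * x := mul_nonneg hsq hx0
      constructor
      · linarith
      · linarith
    · have h1' : tent s x = 1 - s * (x - (1 - 1 / s)) := by
        simp only [tent]; rw [if_neg hbr]
      push_neg at hbr
      rw [h1'] at hyA ⊢
      have hyc : ¬ (1 - s * (x - (1 - 1 / s)) ≤ 1 - 1 / s) := by
        push_neg; linarith [hyA.1]
      simp only [tent]; rw [if_neg hyc]
      have hexp : 1 - s * (1 - s * (x - (1 - 1 / s)) - (1 - 1 / s)) =
          s ^ 2 * x - s ^ 2 * (1 - 1 / s) + (s * (1 - 1 / s) - s) + 1 := by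
        ring
      rw [hexp, hsc, hsc2]
      have hup : s ^ 2 * x ≤ s ^ 2 * b := mul_le_mul_of_nonneg_left hxb hsq
      have hlo : s ^ 2 * (1 - 1 / s) ≤ s ^ 2 * x :=
        mul_le_mul_of_nonneg_left hbr.le hsq
      rw [hsc2] at hlo
      constructor
      · linarith
      · nlinarith [hkey, hup]
  -- even iterates stay in [0,b]
  have heven : ∀ k : ℕ, ∀ x ∈ Set.Icc (0:ℝ) b, (tent s)^[2 * k] x ∈ Set.Icc 0 b := by
    intro k
    induction k with
    | zero => intro x hx; simpa using hx
    | succ k ih =>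
      intro x hx
      rw [show 2 * (k + 1) = 2 * k + 2 by ring, Function.iterate_add_apply]
      have h2 : (tent s)^[2] x = tent s (tent s x) := by
        simp [Function.iterate_succ_apply]
      rw [h2]
      exact ih _ (lemB x hx)
  intro htr
  obtain ⟨n, y, ⟨⟨x, hxU, hxy⟩, hyV, hyI⟩⟩ :=
    htr (Set.Iio b) (Set.Ioo b p) isOpen_Iio isOpen_Ioo
      ⟨0, Set.mem_inter (by exact hb0) ⟨le_refl 0, by norm_num⟩⟩
      ⟨(b + p) / 2, Set.mem_inter ⟨by linarith, by linarith⟩ ⟨by linarith, by linarith⟩⟩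
  have hxIcc : x ∈ Set.Icc (0:ℝ) b := ⟨hxU.2.1, le_of_lt hxU.1⟩
  obtain ⟨hyb, hyp⟩ := hyV
  rcases Nat.even_or_odd n with ⟨k, hk⟩ | ⟨k, hk⟩
  · have := heven k x hxIcc
    rw [show 2 * k = n by omega, hxy] at this
    exact absurd this.2 (not_le.mpr hyb)
  · have he := heven k x hxIcc
    have hrw : (tent s)^[n] x = tent s ((tent s)^[2 * k] x) := by
      rw [show n = 1 + 2 * k by omega, Function.iterate_add_apply]
      simp
    rw [hrw] at hxy
    have hge := (lemA _ he).1
    rw [hxy] at hge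
    linarith
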